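/- The 2-transformation S : [0,1] → [0,1] given by S(x) = {2x, 1−2x} for x ∈ [0,1/2] and S(x) = {2x−1} for x ∈ (1/2,1] is ergodic with respect to Lebesgue measure: every Borel set B with B ⊆ S⁻¹(B) and B^c ⊆ S⁻¹(B^c) has λ(B) = 0 or λ(B^c) = 0. -/

import Mathlib

open MeasureTheory Set Filter Finset
open scoped ENNReal Classical

noncomputable section

/-- The stochastic kernel of a finite-multivalued transformation `S`:
`K(x,B) = |S(x) ∩ B| / |S(x)|`, valued in `ℝ≥0∞`. -/
def fker {X : Type*} (S : X → Finset X) (x : X) (B : Set X) : ℝ≥0∞ :=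
  (((S x).filter (fun y => y ∈ B)).card : ℝ≥0∞) / ((S x).card : ℝ≥0∞)

/-- The set `S⁻¹_{k;l}(B) = {x : |S(x)| = k, |S(x) ∩ B| = l}`. -/
def preimKL {X : Type*} (S : X → Finset X) (k l : ℕ) (B : Set X) : Set X :=
  {x | (S x).card = k ∧ ((S x).filter (fun y => y ∈ B)).card = l}

/-- The full preimage `S⁻¹(B) = {x : S(x) ∩ B ≠ ∅}`. -/
def fullPre {X : Type*} (S : X → Finset X) (B : Set X) : Set X :=
  {x | ∃ y ∈ S x, y ∈ B}

/-- The Koopman operator `Uf(x) = (1/|S(x)|) ∑_{y ∈ S(x)} f(y)`. -/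
def koop {X : Type*} (S : X → Finset X) (f : X → ℝ) (x : X) : ℝ :=
  (∑ y ∈ S x, f y) / ((S x).card : ℝ)

/-! ### Auxiliary material for the proof of `ex2_ergodic` -/

attribute [local instance] ZeroLEOneClass.factZeroLtOne

namespace Ex2Aux

/-- The doubling map on `[0,1]`. -/
def Td : ℝ → ℝ := fun x => if x ≤ 1/2 then 2*x else 2*x - 1

lemma Td_mem {x : ℝ} (hx : x ∈ Set.Ioc (0:ℝ) 1) : Td x ∈ Set.Ioc (0:ℝ) 1 := by
  obtain ⟨h0, h1⟩ := hx
  unfold Td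
  split <;> constructor <;> linarith

lemma coe_two_mul (x : ℝ) :
    ((2*x : ℝ) : UnitAddCircle) = (2:ℕ) • ((x : ℝ) : UnitAddCircle) := by
  have hx2 : (2:ℕ) • x = 2*x := by simp [nsmul_eq_mul]
  rw [← hx2, AddCircle.coe_nsmul]

lemma Td_coe (x : ℝ) : ((Td x : ℝ) : UnitAddCircle) = (2:ℕ) • ((x : ℝ) : UnitAddCircle) := by
  unfold Td
  split
  · exact coe_two_mul x
  · have e : ((2*x - 1 + 1 : ℝ) : UnitAddCircle) = ((2*x - 1 : ℝ) : UnitAddCircle) :=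
      AddCircle.coe_add_period (p := 1) (2*x - 1)
    have e2 : (2*x - 1 + 1 : ℝ) = 2*x := by ring
    rw [← e, e2, coe_two_mul]

/-- A measurable set on the circle matching a given measurable set of reals on `(0,1]`. -/
lemma circle_set (A : Set ℝ) (hA : MeasurableSet A) :
    ∃ A' : Set UnitAddCircle, MeasurableSet A' ∧
      ∀ x : ℝ, x ∈ Set.Ioc (0:ℝ) 1 → (((x : ℝ) : UnitAddCircle) ∈ A' ↔ x ∈ A) := by
  refine ⟨(AddCircle.measurableEquivIoc 1 0) ⁻¹' (Subtype.val ⁻¹' A),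
    (AddCircle.measurableEquivIoc 1 0).measurable (measurable_subtype_coe hA), ?_⟩
  intro x hx
  have hx' : x ∈ Set.Ioc (0:ℝ) (0+1) := by simpa using hx
  have he : (AddCircle.equivIoc 1 0) ((x : ℝ) : UnitAddCircle) = ⟨x, hx'⟩ := by
    rw [Equiv.apply_eq_iff_eq_symm_apply]; rfl
  have he' : ((AddCircle.measurableEquivIoc 1 0) ((x : ℝ) : UnitAddCircle) : ℝ) = x := by
    show ((AddCircle.equivIoc 1 0) ((x : ℝ) : UnitAddCircle) : ℝ) = x
    rw [he]
  simp only [Set.mem_preimage]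
  rw [he']

lemma proj_measure {U : Set UnitAddCircle} (hU : MeasurableSet U) :
    volume U = volume ((QuotientAddGroup.mk ⁻¹' U : Set ℝ) ∩ Set.Ioc (0:ℝ) 1) := by
  simpa using AddCircle.add_projection_respects_measure (T := 1) 0 hU

/-- Null sets pull back to null sets under the doubling map. -/
lemma Td_null {E : Set ℝ} (h0 : volume E = 0) :
    volume (Td ⁻¹' E) = 0 := by
  have hsub : Td ⁻¹' E ⊆ ((fun x : ℝ => 2*x) ⁻¹' E) ∪ ((fun x : ℝ => 2*x - 1) ⁻¹' E) := by
    intro x hx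
    simp only [Td, Set.mem_preimage] at hx
    by_cases h : x ≤ 1/2
    · left; show 2*x ∈ E; rwa [if_pos h] at hx
    · right; show 2*x - 1 ∈ E; rwa [if_neg h] at hx
  have e1 : volume ((fun x : ℝ => 2*x) ⁻¹' E) = 0 := by
    have : (fun x : ℝ => 2*x) ⁻¹' E = (2 * ·) ⁻¹' E := rfl
    rw [this, Real.volume_preimage_mul_left (by norm_num : (2:ℝ) ≠ 0) E, h0, mul_zero]
  have e2 : volume ((fun x : ℝ => 2*x - 1) ⁻¹' E) = 0 := by
    have mp : MeasurePreserving (fun y : ℝ => y - 1) volume volume := by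
      simpa [sub_eq_add_neg] using measurePreserving_add_right (volume : Measure ℝ) (-1)
    have hE1 : volume ((fun y : ℝ => y - 1) ⁻¹' E) = 0 :=
      mp.quasiMeasurePreserving.preimage_null h0
    have : (fun x : ℝ => 2*x - 1) ⁻¹' E = (2 * ·) ⁻¹' ((fun y : ℝ => y - 1) ⁻¹' E) := rfl
    rw [this, Real.volume_preimage_mul_left (by norm_num : (2:ℝ) ≠ 0), hE1, mul_zero]
  refine le_antisymm ?_ zero_le
  calc volume (Td ⁻¹' E) ≤ volume (((fun x : ℝ => 2*x) ⁻¹' E) ∪ ((fun x : ℝ => 2*x - 1) ⁻¹' E)) :=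
        measure_mono hsub
    _ ≤ volume ((fun x : ℝ => 2*x) ⁻¹' E) + volume ((fun x : ℝ => 2*x - 1) ⁻¹' E) :=
        measure_union_le _ _
    _ = 0 := by rw [e1, e2, add_zero]

/-- Ergodicity of the doubling map on `[0,1]`, transferred from the circle. -/
lemma key_ergodic {A : Set ℝ} (hA : MeasurableSet A) (hA1 : A ⊆ Set.Icc (0:ℝ) 1)
    (hinv : volume (A \ Td ⁻¹' A) = 0) : volume A = 0 ∨ volume A = 1 := by
  obtain ⟨A', hA'm, hA'⟩ := circle_set A hA
  have herg : Ergodic (fun y : UnitAddCircle => (2:ℕ) • y) volume :=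
    AddCircle.ergodic_nsmul (by norm_num)
  set f : UnitAddCircle → UnitAddCircle := fun y => (2:ℕ) • y with hf
  have hfm : Measurable f := herg.measurable
  have hUm : MeasurableSet (A' \ f ⁻¹' A') := hA'm.diff (hfm hA'm)
  have hsub : (QuotientAddGroup.mk ⁻¹' (A' \ f ⁻¹' A') : Set ℝ) ∩ Set.Ioc (0:ℝ) 1
      ⊆ A \ Td ⁻¹' A := by
    rintro x ⟨hxm, hxI⟩
    obtain ⟨hx1, hx2⟩ := hxm
    have hxA : x ∈ A := (hA' x hxI).mp hx1
    refine ⟨hxA, fun hTd => hx2 ?_⟩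
    show f ((x : ℝ) : UnitAddCircle) ∈ A'
    have : f ((x : ℝ) : UnitAddCircle) = ((Td x : ℝ) : UnitAddCircle) := (Td_coe x).symm
    rw [this]
    exact (hA' (Td x) (Td_mem hxI)).mpr hTd
  have h0 : volume (A' \ f ⁻¹' A') = 0 := by
    rw [proj_measure hUm]
    exact measure_mono_null hsub hinv
  have hle : A' ≤ᵐ[volume] f ⁻¹' A' := ae_le_set.mpr h0
  have hAv : volume A = volume A' := by
    have hAe : A ∩ Set.Ioc (0:ℝ) 1 = (QuotientAddGroup.mk ⁻¹' A' : Set ℝ) ∩ Set.Ioc (0:ℝ) 1 := by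
      ext x
      constructor
      · rintro ⟨hx1, hx2⟩
        exact ⟨(hA' x hx2).mpr hx1, hx2⟩
      · rintro ⟨hx1, hx2⟩
        exact ⟨(hA' x hx2).mp hx1, hx2⟩
    have h1 : volume A = volume (A ∩ Set.Ioc (0:ℝ) 1) := by
      refine le_antisymm ?_ (measure_mono Set.inter_subset_left)
      calc volume A ≤ volume ((A ∩ Set.Ioc (0:ℝ) 1) ∪ {0}) := by
            refine measure_mono fun x hx => ?_
            rcases eq_or_ne x 0 with rfl | hne
            · exact Or.inr rfl
            · exact Or.inl ⟨hx, lt_of_le_of_ne (hA1 hx).1 (Ne.symm hne), (hA1 hx).2⟩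
        _ ≤ volume (A ∩ Set.Ioc (0:ℝ) 1) + volume ({0} : Set ℝ) := measure_union_le _ _
        _ = volume (A ∩ Set.Ioc (0:ℝ) 1) := by simp
    rw [h1, hAe, ← proj_measure hA'm]
  rcases herg.ae_empty_or_univ_of_ae_le_preimage hA'm.nullMeasurableSet hle with h | h
  · left
    rw [hAv]
    exact ae_eq_empty.mp h
  · right
    rw [hAv]
    have := measure_congr h
    rwa [UnitAddCircle.measure_univ] at this

lemma mem_S {x y : ℝ} (h : y ∈ (if x ≤ 1/2 then ({2*x, 1 - 2*x} : Finset ℝ) else {2*x - 1})) :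
    (x ≤ 1/2 ∧ (y = 2*x ∨ y = 1 - 2*x)) ∨ (¬ x ≤ 1/2 ∧ y = 2*x - 1) := by
  split at h
  · left; exact ⟨‹_›, by simpa using h⟩
  · right; exact ⟨‹_›, by simpa using h⟩

/-- The symmetrization `D ∪ σ⁻¹(D)` of a forward-invariant set for `S` is forward invariant
for the doubling map. -/
lemma tilde_sub {D : Set ℝ}
    (hD : D ⊆ fullPre (fun x : ℝ =>
      if x ≤ 1/2 then ({2*x, 1 - 2*x} : Finset ℝ) else {2*x - 1}) D) :
    (D ∪ (fun y : ℝ => 1 - y) ⁻¹' D) ⊆ Td ⁻¹' (D ∪ (fun y : ℝ => 1 - y) ⁻¹' D) := by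
  rintro x (hx | hx)
  · obtain ⟨y, hy, hyD⟩ := hD hx
    rcases mem_S hy with ⟨h, rfl | rfl⟩ | ⟨h, rfl⟩
    · refine Or.inl (show Td x ∈ D from ?_)
      unfold Td; rw [if_pos h]; exact hyD
    · refine Or.inr (show (1 : ℝ) - Td x ∈ D from ?_)
      have e : (1:ℝ) - Td x = 1 - 2*x := by unfold Td; rw [if_pos h]
      rw [e]; exact hyD
    · refine Or.inl (show Td x ∈ D from ?_)
      unfold Td; rw [if_neg h]; exact hyD
  · obtain ⟨y, hy, hyD⟩ := hD hx
    rcases mem_S hy with ⟨h, rfl | rfl⟩ | ⟨h, rfl⟩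
    · by_cases h2 : x ≤ 1/2
      · have hx12 : x = 1/2 := by linarith
        subst hx12
        refine Or.inl (show Td ((1:ℝ)/2) ∈ D from ?_)
        have e : Td ((1:ℝ)/2) = 2 * (1 - (1:ℝ)/2) := by unfold Td; norm_num
        rw [e]; exact hyD
      · refine Or.inr (show (1:ℝ) - Td x ∈ D from ?_)
        have e : (1:ℝ) - Td x = 2 * (1 - x) := by unfold Td; rw [if_neg h2]; ring
        rw [e]; exact hyD
    · by_cases h2 : x ≤ 1/2
      · have hx12 : x = 1/2 := by linarith
        subst hx12
        refine Or.inr (show (1:ℝ) - Td ((1:ℝ)/2) ∈ D from ?_)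
        have e : (1:ℝ) - Td ((1:ℝ)/2) = 1 - 2*(1 - (1:ℝ)/2) := by unfold Td; norm_num
        rw [e]; exact hyD
      · refine Or.inl (show Td x ∈ D from ?_)
        have e : Td x = 1 - 2*(1 - x) := by unfold Td; rw [if_neg h2]; ring
        rw [e]; exact hyD
    · have h2 : x ≤ 1/2 := by push_neg at h; linarith
      refine Or.inr (show (1:ℝ) - Td x ∈ D from ?_)
      have e : (1:ℝ) - Td x = 2*(1 - x) - 1 := by unfold Td; rw [if_pos h2]; ring
      rw [e]; exact hyD

end Ex2Aux

open Ex2Aux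

/-- the 2-transformation `S(x) = {2x, 1-2x}` on `[0,1/2]`,
`S(x) = {2x-1}` on `(1/2,1]` is ergodic with respect to Lebesgue measure on `[0,1]`. -/
theorem ex2_ergodic :
    ∀ B : Set ℝ, MeasurableSet B → B ⊆ Set.Icc (0:ℝ) 1 →
      B ⊆ fullPre (fun x : ℝ =>
        if x ≤ 1/2 then ({2*x, 1 - 2*x} : Finset ℝ) else {2*x - 1}) B →
      Set.Icc (0:ℝ) 1 \ B ⊆ fullPre (fun x : ℝ =>
        if x ≤ 1/2 then ({2*x, 1 - 2*x} : Finset ℝ) else {2*x - 1})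
        (Set.Icc (0:ℝ) 1 \ B) →
      volume B = 0 ∨ volume (Set.Icc (0:ℝ) 1 \ B) = 0 := by
  intro B hB hBI hBpre hCpre
  set C : Set ℝ := Set.Icc (0:ℝ) 1 \ B with hCdef
  have hCm : MeasurableSet C := measurableSet_Icc.diff hB
  have hCI : C ⊆ Set.Icc (0:ℝ) 1 := Set.diff_subset
  set σ : ℝ → ℝ := fun y => 1 - y with hσdef
  have mpσ : MeasurePreserving σ volume volume := by
    have h := (measurePreserving_add_left (volume : Measure ℝ) 1).comp
      (Measure.measurePreserving_neg (volume : Measure ℝ))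
    simpa [hσdef, Function.comp_def, sub_eq_add_neg] using h
  have hσm : Measurable σ := mpσ.measurable
  have hσsub : ∀ D : Set ℝ, D ⊆ Set.Icc (0:ℝ) 1 → σ ⁻¹' D ⊆ Set.Icc (0:ℝ) 1 := by
    intro D hD x hx
    have h1 := (hD hx).1
    have h2 := (hD hx).2
    simp only [hσdef] at h1 h2
    exact ⟨by linarith, by linarith⟩
  set Bt : Set ℝ := B ∪ σ ⁻¹' B with hBtdef
  set Ct : Set ℝ := C ∪ σ ⁻¹' C with hCtdef
  have hBtm : MeasurableSet Bt := hB.union (hσm hB)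
  have hCtm : MeasurableSet Ct := hCm.union (hσm hCm)
  have hBtI : Bt ⊆ Set.Icc (0:ℝ) 1 := Set.union_subset hBI (hσsub B hBI)
  have hCtI : Ct ⊆ Set.Icc (0:ℝ) 1 := Set.union_subset hCI (hσsub C hCI)
  have hBt_inv : volume (Bt \ Td ⁻¹' Bt) = 0 := by
    rw [Set.diff_eq_empty.mpr (tilde_sub hBpre)]; exact measure_empty
  have hCt_inv : volume (Ct \ Td ⁻¹' Ct) = 0 := by
    rw [Set.diff_eq_empty.mpr (tilde_sub hCpre)]; exact measure_empty
  rcases key_ergodic hBtm hBtI hBt_inv with hBt0 | hBt1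
  · exact Or.inl (measure_mono_null Set.subset_union_left hBt0)
  rcases key_ergodic hCtm hCtI hCt_inv with hCt0 | hCt1
  · exact Or.inr (measure_mono_null Set.subset_union_left hCt0)
  -- Both symmetrizations have full measure; derive a contradiction.
  exfalso
  have hIcc : volume (Set.Icc (0:ℝ) 1) = 1 := by simp
  have hBtc : volume (Set.Icc (0:ℝ) 1 \ Bt) = 0 := by
    rw [measure_diff hBtI hBtm.nullMeasurableSet (by rw [hBt1]; exact ENNReal.one_ne_top),
      hBt1, hIcc, tsub_self]
  have hCtc : volume (Set.Icc (0:ℝ) 1 \ Ct) = 0 := by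
    rw [measure_diff hCtI hCtm.nullMeasurableSet (by rw [hCt1]; exact ENNReal.one_ne_top),
      hCt1, hIcc, tsub_self]
  -- N1 = B \ σ⁻¹C is null
  have hN1 : volume (B \ σ ⁻¹' C) = 0 := by
    refine measure_mono_null (fun x hx => ?_) hCtc
    obtain ⟨hx1, hx2⟩ := hx
    refine ⟨hBI hx1, fun hxCt => ?_⟩
    rcases hxCt with h | h
    · exact h.2 hx1
    · exact hx2 h
  -- N2 = σ⁻¹C \ B is null
  have hN2 : volume (σ ⁻¹' C \ B) = 0 := by
    refine measure_mono_null (fun x hx => ?_) hBtc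
    obtain ⟨hx1, hx2⟩ := hx
    refine ⟨hσsub C hCI hx1, fun hxBt => ?_⟩
    rcases hxBt with h | h
    · exact hx2 h
    · exact hx1.2 h
  -- B ∩ σ⁻¹B is null
  have hBB : volume (B ∩ σ ⁻¹' B) = 0 := by
    refine measure_mono_null (fun x hx => ?_) hN1
    obtain ⟨hx1, hx2⟩ := hx
    refine ⟨hx1, fun hxC => ?_⟩
    exact hxC.2 hx2
  -- volume B + volume B = 1
  have hσB : volume (σ ⁻¹' B) = volume B := mpσ.measure_preimage hB.nullMeasurableSet
  have hsum : volume B + volume B = 1 := by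
    have h := measure_union_add_inter (μ := volume) B (hσm hB)
    rw [← hBtdef] at h
    rw [hBt1, hBB, add_zero, hσB] at h
    exact h.symm
  -- B is a.e. forward invariant under Td
  have hBinv : volume (B \ Td ⁻¹' B) = 0 := by
    have hsub : B \ Td ⁻¹' B ⊆ (B \ σ ⁻¹' C) ∪ ({1/2} : Set ℝ) ∪ Td ⁻¹' (σ ⁻¹' C \ B) := by
      rintro x ⟨hxB, hxT⟩
      by_cases hx12 : x = 1/2
      · exact Or.inl (Or.inr hx12)
      by_cases hxσC : x ∈ σ ⁻¹' C
      · -- x ∈ B ∩ σ⁻¹C, x ≠ 1/2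
        have hxI := hBI hxB
        by_cases h2 : x ≤ 1/2
        · -- x < 1/2
          have hxlt : x < 1/2 := lt_of_le_of_ne h2 hx12
          -- 1 - x ∈ C and 1 - x > 1/2
          have h1x : (1:ℝ) - x ∈ C := hxσC
          obtain ⟨y, hy, hyC⟩ := hCpre h1x
          rcases mem_S hy with ⟨h, _⟩ | ⟨h, rfl⟩
          · exfalso; linarith
          · -- y = 2*(1-x) - 1 = 1 - 2x ∈ C
            refine Or.inr ?_
            show Td x ∈ σ ⁻¹' C \ B
            have eT : Td x = 2*x := by unfold Td; rw [if_pos h2]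
            constructor
            · show σ (Td x) ∈ C
              have e : σ (Td x) = 2*(1 - x) - 1 := by rw [eT]; simp only [hσdef]; ring
              rw [e]; exact hyC
            · intro hc
              exact hxT (show Td x ∈ B from hc)
        · -- x > 1/2 : Td x = 2x - 1 ∈ B by hBpre, contradiction
          exfalso
          obtain ⟨y, hy, hyB⟩ := hBpre hxB
          rcases mem_S hy with ⟨h, _⟩ | ⟨h, rfl⟩
          · exact h2 h
          · have eT : Td x = 2*x - 1 := by unfold Td; rw [if_neg h2]
            exact hxT (show Td x ∈ B from by rw [eT]; exact hyB)
      · exact Or.inl (Or.inl ⟨hxB, hxσC⟩)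
    refine measure_mono_null hsub (le_antisymm ?_ zero_le)
    calc volume ((B \ σ ⁻¹' C) ∪ ({1/2} : Set ℝ) ∪ Td ⁻¹' (σ ⁻¹' C \ B))
        ≤ volume ((B \ σ ⁻¹' C) ∪ ({1/2} : Set ℝ)) + volume (Td ⁻¹' (σ ⁻¹' C \ B)) :=
          measure_union_le _ _
      _ ≤ (volume (B \ σ ⁻¹' C) + volume ({1/2} : Set ℝ)) + volume (Td ⁻¹' (σ ⁻¹' C \ B)) := by
          gcongr; exact measure_union_le _ _
      _ = 0 := by rw [hN1, Td_null hN2]; simp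
  rcases key_ergodic hB hBI hBinv with h0 | h1
  · rw [h0, add_zero] at hsum; exact zero_ne_one hsum
  · rw [h1] at hsum
    norm_num at hsum
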